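/- Let F : E → ℝ be convex, differentiable, and β-smooth, let w* be a global minimizer of F, and let 0 < η ≤ 1/β. If v ∈ E satisfies v ≠ w* and θ := F(v) − F(w*) > 0, then the point v' = v − η∇F(v) satisfies F(v') − F(w*) ≤ θ − η(1 − βη/2)·θ²/‖v − w*‖². -/

import Mathlib

open InnerProductSpace

local notation "⟪" x ", " y "⟫" => @inner ℝ _ _ x y

/-- Derivative of `F` along a line. -/
lemma hasDerivAt_line {E : Type*} [NormedAddCommGroup E] [InnerProductSpace ℝ E]
    [CompleteSpace E] {F : E → ℝ} (hdiff : Differentiable ℝ F) (x u : E) (t : ℝ) :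
    HasDerivAt (fun s : ℝ => F (x + s • u)) ⟪gradient F (x + t • u), u⟫ t := by
  have hline : HasDerivAt (fun s : ℝ => x + s • u) u t := by
    simpa using ((hasDerivAt_id t).smul_const u).const_add x
  have hF := (hdiff (x + t • u)).hasGradientAt
  rw [hasGradientAt_iff_hasFDerivAt] at hF
  have := hF.comp_hasDerivAt t hline
  simpa [Function.comp_def] using this

/-- Descent lemma: `β`-smoothness gives a quadratic upper bound. -/
lemma descent_lemma {E : Type*} [NormedAddCommGroup E] [InnerProductSpace ℝ E]
    [CompleteSpace E] {F : E → ℝ} {β : ℝ} (hβ : 0 < β)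
    (hdiff : Differentiable ℝ F)
    (hsmooth : ∀ w w' : E, ‖gradient F w - gradient F w'‖ ≤ β * ‖w - w'‖)
    (x u : E) :
    F (x + u) ≤ F x + ⟪gradient F x, u⟫ + β / 2 * ‖u‖ ^ 2 := by
  set c : ℝ := ⟪gradient F x, u⟫
  set h : ℝ → ℝ := fun t => F (x + t • u) - t * c - β * t ^ 2 / 2 * ‖u‖ ^ 2 with hh
  have hderiv : ∀ t : ℝ, HasDerivAt h
      (⟪gradient F (x + t • u), u⟫ - c - β * t * ‖u‖ ^ 2) t := by
    intro t
    have h1 := hasDerivAt_line hdiff x u t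
    have h2 : HasDerivAt (fun s : ℝ => s * c) c t := by
      simpa using (hasDerivAt_id t).mul_const c
    have h3 : HasDerivAt (fun s : ℝ => β * s ^ 2 / 2 * ‖u‖ ^ 2) (β * t * ‖u‖ ^ 2) t := by
      have : HasDerivAt (fun s : ℝ => s ^ 2) (2 * t) t := by
        simpa using hasDerivAt_pow 2 t
      have := ((this.const_mul β).div_const 2).mul_const (‖u‖ ^ 2)
      convert this using 1
      · rfl
      · rfl
      · ring
    exact (h1.sub h2).sub h3
  have hanti : AntitoneOn h (Set.Icc (0 : ℝ) 1) := by
    apply antitoneOn_of_deriv_nonpos (convex_Icc 0 1)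
    · exact fun t _ => ((hderiv t).continuousAt).continuousWithinAt
    · exact fun t _ => ((hderiv t).differentiableAt).differentiableWithinAt
    · intro t ht
      rw [interior_Icc] at ht
      rw [(hderiv t).deriv]
      have hcs : ⟪gradient F (x + t • u) - gradient F x, u⟫ ≤
          ‖gradient F (x + t • u) - gradient F x‖ * ‖u‖ := real_inner_le_norm _ _
      have hsm : ‖gradient F (x + t • u) - gradient F x‖ ≤ β * ‖t • u‖ := by
        simpa using hsmooth (x + t • u) x
      have hn : ‖t • u‖ = t * ‖u‖ := by
        rw [norm_smul, Real.norm_eq_abs, abs_of_pos ht.1]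
      have key : ⟪gradient F (x + t • u), u⟫ - c ≤ β * t * ‖u‖ ^ 2 := by
        have := hcs.trans (mul_le_mul_of_nonneg_right (hsm.trans_eq (by rw [hn]))
          (norm_nonneg u))
        rw [inner_sub_left] at hcs
        calc ⟪gradient F (x + t • u), u⟫ - c
            = ⟪gradient F (x + t • u) - gradient F x, u⟫ := by
              rw [inner_sub_left]
          _ ≤ ‖gradient F (x + t • u) - gradient F x‖ * ‖u‖ := real_inner_le_norm _ _
          _ ≤ (β * (t * ‖u‖)) * ‖u‖ := by
              apply mul_le_mul_of_nonneg_right _ (norm_nonneg u)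
              rw [← hn]; exact hsm
          _ = β * t * ‖u‖ ^ 2 := by ring
      linarith
  have h10 : h 1 ≤ h 0 := hanti (by norm_num) (by norm_num) (by norm_num)
  simp only [hh, one_smul, one_pow, zero_smul, add_zero, mul_one] at h10
  nlinarith [h10]

/-- Convexity lower bound via the gradient. -/
lemma convex_grad_lower {E : Type*} [NormedAddCommGroup E] [InnerProductSpace ℝ E]
    [CompleteSpace E] {F : E → ℝ} (hdiff : Differentiable ℝ F)
    (hconv : ConvexOn ℝ Set.univ F) (x y : E) :
    F x + ⟪gradient F x, y - x⟫ ≤ F y := by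
  set φ : ℝ → ℝ := fun t => F (x + t • (y - x)) with hφ
  have hφconv : ConvexOn ℝ Set.univ φ := by
    have haff : ConvexOn ℝ Set.univ (F ∘ (AffineMap.lineMap x y : ℝ →ᵃ[ℝ] E)) := by
      apply hconv.comp_affineMap
    have heq : φ = F ∘ (AffineMap.lineMap x y : ℝ →ᵃ[ℝ] E) := by
      funext t
      simp [hφ, AffineMap.lineMap_apply, Function.comp, add_comm]
    rw [heq]
    exact haff
  have hder : HasDerivAt φ ⟪gradient F x, y - x⟫ 0 := by
    have := hasDerivAt_line hdiff x (y - x) 0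
    simpa using this
  have hslope := hφconv.le_slope_of_hasDerivAt (Set.mem_univ (0:ℝ)) (Set.mem_univ (1:ℝ))
    one_pos hder
  have : slope φ 0 1 = φ 1 - φ 0 := by simp [slope_def_field]
  rw [this] at hslope
  have h0 : φ 0 = F x := by simp [hφ]
  have h1 : φ 1 = F y := by simp [hφ]
  rw [h0, h1] at hslope
  linarith

theorem gradient_step_gap_recursion
    {E : Type*} [NormedAddCommGroup E] [InnerProductSpace ℝ E] [CompleteSpace E]
    (F : E → ℝ) (β η : ℝ) (wstar : E)
    (hβ : 0 < β) (hη0 : 0 < η) (hη : η ≤ 1 / β)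
    (hdiff : Differentiable ℝ F)
    (hconv : ConvexOn ℝ Set.univ F)
    (hsmooth : ∀ w w' : E, ‖gradient F w - gradient F w'‖ ≤ β * ‖w - w'‖)
    (hstar : ∀ w : E, F wstar ≤ F w)
    (v : E) (hne : v ≠ wstar) (hθ : 0 < F v - F wstar) :
    F (v - η • gradient F v) - F wstar ≤
      (F v - F wstar) -
        η * (1 - β * η / 2) * (F v - F wstar) ^ 2 / ‖v - wstar‖ ^ 2 := by
  set g : E := gradient F v with hg
  set θ : ℝ := F v - F wstar with hθdef
  -- descent step
  have hdesc : F (v - η • g) ≤ F v - η * (1 - β * η / 2) * ‖g‖ ^ 2 := by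
    have := descent_lemma hβ hdiff hsmooth v (-(η • g))
    have heq : v + -(η • g) = v - η • g := by abel
    rw [heq] at this
    have hip : ⟪g, -(η • g)⟫ = -(η * ‖g‖ ^ 2) := by
      rw [inner_neg_right, real_inner_smul_right, real_inner_self_eq_norm_sq]
    have hns : ‖-(η • g)‖ ^ 2 = η ^ 2 * ‖g‖ ^ 2 := by
      rw [norm_neg, norm_smul, Real.norm_eq_abs, mul_pow, sq_abs]
    rw [hip, hns] at this
    calc F (v - η • g) ≤ F v + -(η * ‖g‖ ^ 2) + β / 2 * (η ^ 2 * ‖g‖ ^ 2) := this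
      _ = F v - η * (1 - β * η / 2) * ‖g‖ ^ 2 := by ring
  -- convexity lower bound on gradient norm
  have hnv : 0 < ‖v - wstar‖ := by
    rw [norm_pos_iff, sub_ne_zero]; exact hne
  have hlb : θ ≤ ‖g‖ * ‖v - wstar‖ := by
    have hcvx := convex_grad_lower hdiff hconv v wstar
    have : θ ≤ ⟪g, v - wstar⟫ := by
      have : ⟪g, wstar - v⟫ ≤ F wstar - F v := by linarith
      have h2 : ⟪g, v - wstar⟫ = -⟪g, wstar - v⟫ := by
        rw [← inner_neg_right]; congr 1; abel
      rw [h2]; linarith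
    exact this.trans (real_inner_le_norm g (v - wstar))
  have hgge : θ / ‖v - wstar‖ ≤ ‖g‖ := by
    rw [div_le_iff₀ hnv]; exact hlb
  have hgsq : θ ^ 2 / ‖v - wstar‖ ^ 2 ≤ ‖g‖ ^ 2 := by
    have h0 : 0 ≤ θ / ‖v - wstar‖ := div_nonneg hθ.le hnv.le
    calc θ ^ 2 / ‖v - wstar‖ ^ 2 = (θ / ‖v - wstar‖) ^ 2 := by rw [div_pow]
      _ ≤ ‖g‖ ^ 2 := pow_le_pow_left₀ h0 hgge 2
  -- coefficient nonneg
  have hcoef : 0 ≤ η * (1 - β * η / 2) := by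
    have hβη : β * η ≤ 1 := by
      have h := mul_le_mul_of_nonneg_left hη hβ.le
      rwa [mul_one_div, div_self hβ.ne'] at h
    nlinarith
  have : η * (1 - β * η / 2) * (θ ^ 2 / ‖v - wstar‖ ^ 2) ≤
      η * (1 - β * η / 2) * ‖g‖ ^ 2 := mul_le_mul_of_nonneg_left hgsq hcoef
  have hrw : η * (1 - β * η / 2) * θ ^ 2 / ‖v - wstar‖ ^ 2 =
      η * (1 - β * η / 2) * (θ ^ 2 / ‖v - wstar‖ ^ 2) := by ring
  rw [hrw]
  linarith
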